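/- For the product field Y_i = X_i X_{i+k} (k ∈ Z^d fixed), the physical dependence measure satisfies δ_{i,p/2}(Y) ≤ ||X_0||_p (δ_{i+k,p} + δ_{i,p}) for any p ≥ 2. Consequently, if Δ_4 = Σ_{i∈Z^d} δ_{i,4} < ∞, then Σ_{i∈Z^d} δ_{i,2}(Y) < ∞. -/

import Mathlib

open MeasureTheory ProbabilityTheory Filter
open scoped ENNReal

section Aux

variable {Ω J : Type*} [MeasurableSpace Ω]

/-- Joint law of finitely many members of an independent family is the product of marginals. -/
lemma aux_joint_pi (μ : Measure Ω) [IsProbabilityMeasure μ]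
    (f : J → Ω → ℝ) (hf : ∀ j, Measurable (f j))
    (hindep : iIndepFun f μ)
    {S : Type*} [Fintype S] (σ : S → J) (hσ : Function.Injective σ) :
    Measure.map (fun ω s => f (σ s) ω) μ
      = Measure.pi (fun s => Measure.map (f (σ s)) μ) := by
  classical
  haveI : ∀ s : S, IsProbabilityMeasure (Measure.map (f (σ s)) μ) :=
    fun s => Measure.isProbabilityMeasure_map (hf _).aemeasurable
  refine (Measure.pi_eq (μ := fun s => Measure.map (f (σ s)) μ) fun B hB => ?_).symm
  rw [Measure.map_apply (measurable_pi_lambda _ fun s => hf _) (MeasurableSet.univ_pi hB)]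
  have hpre : (fun ω s => f (σ s) ω) ⁻¹' (Set.pi Set.univ B) = ⋂ s, f (σ s) ⁻¹' B s := by
    ext ω; simp [Set.mem_univ_pi]
  rw [hpre]
  set D : S → Set Ω := fun s => f (σ s) ⁻¹' B s with hD
  set C : J → Set Ω := Function.extend σ D (fun _ => Set.univ) with hC
  have hCσ : ∀ s, C (σ s) = D s := fun s => hσ.extend_apply _ _ _
  have hiInter : (⋂ s, D s) = ⋂ j ∈ Finset.image σ Finset.univ, C j := by
    ext ω
    simp only [Set.mem_iInter, Finset.mem_image, Finset.mem_univ, true_and]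
    constructor
    · rintro h j ⟨s, rfl⟩
      rw [hCσ]; exact h s
    · intro h s
      rw [← hCσ]; exact h _ ⟨s, rfl⟩
  rw [hiInter]
  have hmeas : ∀ j ∈ Finset.image σ Finset.univ,
      MeasurableSet[(inferInstance : MeasurableSpace ℝ).comap (f j)] (C j) := by
    intro j hj
    obtain ⟨s, -, rfl⟩ := Finset.mem_image.1 hj
    rw [hCσ]
    exact ⟨B s, hB s, rfl⟩
  rw [hindep.meas_biInter hmeas, Finset.prod_image (fun a _ b _ h => hσ h)]
  refine Finset.prod_congr rfl fun s _ => ?_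
  rw [hCσ, hD, Measure.map_apply (hf _) (hB s)]

/-- Two injective selections from an independent family with the same marginals have the
same joint law. -/
lemma aux_map_family_eq (μ : Measure Ω) [IsProbabilityMeasure μ]
    (f : J → Ω → ℝ) (hf : ∀ j, Measurable (f j))
    (hindep : iIndepFun f μ)
    {S : Type*} (σ τ : S → J) (hσ : Function.Injective σ) (hτ : Function.Injective τ)
    (hid : ∀ s, Measure.map (f (σ s)) μ = Measure.map (f (τ s)) μ) :
    Measure.map (fun ω s => f (σ s) ω) μ = Measure.map (fun ω s => f (τ s) ω) μ := by
  have hmσ : Measurable (fun ω (s : S) => f (σ s) ω) := measurable_pi_lambda _ fun s => hf _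
  have hmτ : Measurable (fun ω (s : S) => f (τ s) ω) := measurable_pi_lambda _ fun s => hf _
  haveI : IsProbabilityMeasure (Measure.map (fun ω (s : S) => f (σ s) ω) μ) :=
    Measure.isProbabilityMeasure_map hmσ.aemeasurable
  haveI : IsProbabilityMeasure (Measure.map (fun ω (s : S) => f (τ s) ω) μ) :=
    Measure.isProbabilityMeasure_map hmτ.aemeasurable
  refine ext_of_generate_finite _ generateFrom_measurableCylinders.symm
    isPiSystem_measurableCylinders (fun t ht => ?_) ?_
  · obtain ⟨u, S', hS', rfl⟩ := (mem_measurableCylinders t).1 ht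
    have hcyl : ∀ (ρ : S → J), (fun ω (s : S) => f (ρ s) ω) ⁻¹' cylinder u S'
        = (fun ω (s : u) => f (ρ s) ω) ⁻¹' S' := by
      intro ρ; rfl
    have hres : MeasurableSet (cylinder (α := fun _ : S => ℝ) u S') :=
      MeasurableSet.of_mem_measurableCylinders ht
    rw [Measure.map_apply hmσ hres, Measure.map_apply hmτ hres, hcyl, hcyl,
      ← Measure.map_apply (measurable_pi_lambda _ fun s : u => hf _) hS',
      ← Measure.map_apply (measurable_pi_lambda _ fun s : u => hf _) hS',
      aux_joint_pi μ f hf hindep (fun s : u => σ s) (hσ.comp Subtype.coe_injective),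
      aux_joint_pi μ f hf hindep (fun s : u => τ s) (hτ.comp Subtype.coe_injective)]
    have hmarg : (fun s : u => Measure.map (f (σ s)) μ)
        = fun s : u => Measure.map (f (τ s)) μ := funext fun s => hid s
    rw [hmarg]
  · simp

end Aux

/-- For the product field `Y_i = X_i X_{i+k}` (with coupled version
`Y_i* = X_i* X_{i+k}*`), one has `δ_{i,p/2}(Y) ≤ ‖X_0‖_p (δ_{i+k,p} + δ_{i,p})` for
`p ≥ 2`; consequently if `Δ_4 = Σ_i δ_{i,4} < ∞` then `Σ_i δ_{i,2}(Y) < ∞`. -/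
theorem stmt_8 {d : ℕ} {Ω : Type*} [MeasurableSpace Ω] (μ : Measure Ω)
    [IsProbabilityMeasure μ]
    (ε : (Fin d → ℤ) → Ω → ℝ) (ε0' : Ω → ℝ)
    (hmeas : ∀ j, Measurable (ε j)) (hmeas' : Measurable ε0')
    (hindep : iIndepFun (Sum.elim ε (fun _ : Unit => ε0')) μ)
    (hident : ∀ j, Measure.map (ε j) μ = Measure.map ε0' μ)
    (g : ((Fin d → ℤ) → ℝ) → ℝ) (hg : Measurable g)
    (X Xstar : (Fin d → ℤ) → Ω → ℝ)
    (hX : ∀ i ω, X i ω = g (fun s => ε (i - s) ω))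
    (hXstar : ∀ i ω, Xstar i ω = g (fun s => if i - s = 0 then ε0' ω else ε (i - s) ω))
    (k : Fin d → ℤ)
    (Y Ystar : (Fin d → ℤ) → Ω → ℝ)
    (hY : ∀ i ω, Y i ω = X i ω * X (i + k) ω)
    (hYstar : ∀ i ω, Ystar i ω = Xstar i ω * Xstar (i + k) ω) :
    (∀ p : ℝ≥0∞, 2 ≤ p → (∀ i, MemLp (X i) p μ) →
        ∀ i, eLpNorm (Y i - Ystar i) (p / 2) μ
          ≤ eLpNorm (X 0) p μ
            * (eLpNorm (X (i + k) - Xstar (i + k)) p μ + eLpNorm (X i - Xstar i) p μ))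
      ∧ ((∀ i, MemLp (X i) 4 μ) →
          (∑' i : Fin d → ℤ, eLpNorm (X i - Xstar i) 4 μ) ≠ ∞ →
          (∑' i : Fin d → ℤ, eLpNorm (Y i - Ystar i) 2 μ) ≠ ∞) := by
  classical
  set f : ((Fin d → ℤ) ⊕ Unit) → Ω → ℝ := Sum.elim ε (fun _ : Unit => ε0') with hf_def
  have hf : ∀ j, Measurable (f j) := by
    rintro (j | u)
    · exact hmeas j
    · exact hmeas'
  have hmarg : ∀ j, Measure.map (f j) μ = Measure.map ε0' μ := by
    rintro (j | u)
    · exact hident j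
    · rfl
  -- selection maps
  set σ : (Fin d → ℤ) → (Fin d → ℤ) → ((Fin d → ℤ) ⊕ Unit) :=
    fun i s => Sum.inl (i - s) with hσ_def
  set τ : (Fin d → ℤ) → (Fin d → ℤ) → ((Fin d → ℤ) ⊕ Unit) :=
    fun i s => if i - s = 0 then Sum.inr () else Sum.inl (i - s) with hτ_def
  have hσinj : ∀ i, Function.Injective (σ i) := by
    intro i s s' h
    have := Sum.inl.inj h
    exact sub_right_injective this
  have hτinj : ∀ i, Function.Injective (τ i) := by
    intro i s s' h
    simp only [hτ_def] at h
    by_cases h1 : i - s = 0 <;> by_cases h2 : i - s' = 0 <;>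
        simp only [h1, h2, if_true, if_false, reduceCtorEq, Sum.inl.injEq] at h
    · exact (sub_eq_zero.mp h1).symm.trans (sub_eq_zero.mp h2)
    · exact sub_right_injective h
  -- laws of the shifted families
  have hlawX : ∀ i, Measure.map (fun ω (s : Fin d → ℤ) => ε (i - s) ω) μ
      = Measure.map (fun ω (s : Fin d → ℤ) => ε (0 - s) ω) μ := by
    intro i
    exact aux_map_family_eq μ f hf hindep (σ i) (σ 0) (hσinj i) (hσinj 0)
      (fun s => by rw [hmarg, hmarg])
  have hlawXstar : ∀ i, Measure.map
        (fun ω (s : Fin d → ℤ) => if i - s = 0 then ε0' ω else ε (i - s) ω) μ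
      = Measure.map (fun ω (s : Fin d → ℤ) => ε (0 - s) ω) μ := by
    intro i
    have : (fun ω (s : Fin d → ℤ) => if i - s = 0 then ε0' ω else ε (i - s) ω)
        = fun ω s => f (τ i s) ω := by
      funext ω s
      simp only [hτ_def]
      split_ifs <;> rfl
    rw [this]
    exact aux_map_family_eq μ f hf hindep (τ i) (σ 0) (hτinj i) (hσinj 0)
      (fun s => by rw [hmarg, hmarg])
  -- measurability of the families
  have hFmeas : ∀ i, Measurable (fun ω (s : Fin d → ℤ) => ε (i - s) ω) :=
    fun i => measurable_pi_lambda _ fun s => hmeas _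
  have hFstarmeas : ∀ i, Measurable
      (fun ω (s : Fin d → ℤ) => if i - s = 0 then ε0' ω else ε (i - s) ω) := by
    intro i
    refine measurable_pi_lambda _ fun s => ?_
    split_ifs
    · exact hmeas'
    · exact hmeas _
  have hXeq : ∀ i, X i = g ∘ (fun ω (s : Fin d → ℤ) => ε (i - s) ω) := by
    intro i; funext ω; exact hX i ω
  have hXstareq : ∀ i, Xstar i
      = g ∘ (fun ω (s : Fin d → ℤ) => if i - s = 0 then ε0' ω else ε (i - s) ω) := by
    intro i; funext ω; exact hXstar i ω
  have hXmeas : ∀ i, Measurable (X i) := fun i => by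
    rw [hXeq i]; exact hg.comp (hFmeas i)
  have hXstarmeas : ∀ i, Measurable (Xstar i) := fun i => by
    rw [hXstareq i]; exact hg.comp (hFstarmeas i)
  -- identical Lp norms
  have hnormX : ∀ (p : ℝ≥0∞) i, eLpNorm (X i) p μ = eLpNorm (X 0) p μ := by
    intro p i
    rw [hXeq i, hXeq 0,
      ← eLpNorm_map_measure hg.aestronglyMeasurable (hFmeas i).aemeasurable,
      ← eLpNorm_map_measure hg.aestronglyMeasurable (hFmeas 0).aemeasurable, hlawX i]
  have hnormXstar : ∀ (p : ℝ≥0∞) i, eLpNorm (Xstar i) p μ = eLpNorm (X 0) p μ := by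
    intro p i
    rw [hXstareq i, hXeq 0,
      ← eLpNorm_map_measure hg.aestronglyMeasurable (hFstarmeas i).aemeasurable,
      ← eLpNorm_map_measure hg.aestronglyMeasurable (hFmeas 0).aemeasurable,
      hlawXstar i, hlawX 0]
  -- Part 1
  have part1 : ∀ p : ℝ≥0∞, 2 ≤ p → (∀ i, MemLp (X i) p μ) →
      ∀ i, eLpNorm (Y i - Ystar i) (p / 2) μ
        ≤ eLpNorm (X 0) p μ
          * (eLpNorm (X (i + k) - Xstar (i + k)) p μ + eLpNorm (X i - Xstar i) p μ) := by
    intro p hp hmem i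
    have hsplit : Y i - Ystar i
        = (fun ω => X i ω * (X (i + k) ω - Xstar (i + k) ω))
          + (fun ω => Xstar (i + k) ω * (X i ω - Xstar i ω)) := by
      funext ω
      simp only [Pi.sub_apply, Pi.add_apply, hY, hYstar]
      ring
    have h1 : (1 : ℝ≥0∞) ≤ p / 2 := by
      rw [show (1 : ℝ≥0∞) = 2 / 2 by
        rw [ENNReal.div_self (by norm_num) (by norm_num)]]
      exact ENNReal.div_le_div_right hp 2
    have hpqr : 1 / (p / 2) = 1 / p + 1 / p := by
      rw [ENNReal.div_add_div_same, one_add_one_eq_two, one_div,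
        ENNReal.inv_div (Or.inl (by norm_num)) (Or.inl (by norm_num))]
    have hm1 : AEStronglyMeasurable
        (fun ω => X i ω * (X (i + k) ω - Xstar (i + k) ω)) μ :=
      ((hXmeas i).mul ((hXmeas (i + k)).sub (hXstarmeas (i + k)))).aestronglyMeasurable
    have hm2 : AEStronglyMeasurable
        (fun ω => Xstar (i + k) ω * (X i ω - Xstar i ω)) μ :=
      ((hXstarmeas (i + k)).mul ((hXmeas i).sub (hXstarmeas i))).aestronglyMeasurable
    have hH1 : eLpNorm (fun ω => X i ω * (X (i + k) ω - Xstar (i + k) ω)) (p / 2) μ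
        ≤ eLpNorm (X i) p μ * eLpNorm (X (i + k) - Xstar (i + k)) p μ := by
      refine eLpNorm_le_eLpNorm_mul_eLpNorm'_of_norm (hXmeas i).aestronglyMeasurable
        (((hXmeas (i + k)).sub (hXstarmeas (i + k))).aestronglyMeasurable)
        (· * ·) 1 (Filter.Eventually.of_forall fun ω => ?_)
          (hpqr := ⟨by simpa only [one_div] using hpqr.symm⟩) |>.trans (le_of_eq (by simp))
      simp [Pi.sub_apply, abs_mul]
    have hH2 : eLpNorm (fun ω => Xstar (i + k) ω * (X i ω - Xstar i ω)) (p / 2) μ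
        ≤ eLpNorm (Xstar (i + k)) p μ * eLpNorm (X i - Xstar i) p μ := by
      refine eLpNorm_le_eLpNorm_mul_eLpNorm'_of_norm (hXstarmeas (i + k)).aestronglyMeasurable
        (((hXmeas i).sub (hXstarmeas i)).aestronglyMeasurable)
        (· * ·) 1 (Filter.Eventually.of_forall fun ω => ?_)
          (hpqr := ⟨by simpa only [one_div] using hpqr.symm⟩) |>.trans (le_of_eq (by simp))
      simp [Pi.sub_apply, abs_mul]
    calc eLpNorm (Y i - Ystar i) (p / 2) μ
        ≤ eLpNorm (fun ω => X i ω * (X (i + k) ω - Xstar (i + k) ω)) (p / 2) μ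
          + eLpNorm (fun ω => Xstar (i + k) ω * (X i ω - Xstar i ω)) (p / 2) μ := by
          rw [hsplit]; exact eLpNorm_add_le hm1 hm2 h1
      _ ≤ eLpNorm (X i) p μ * eLpNorm (X (i + k) - Xstar (i + k)) p μ
          + eLpNorm (Xstar (i + k)) p μ * eLpNorm (X i - Xstar i) p μ := add_le_add hH1 hH2
      _ = eLpNorm (X 0) p μ
          * (eLpNorm (X (i + k) - Xstar (i + k)) p μ + eLpNorm (X i - Xstar i) p μ) := by
          rw [hnormX p i, hnormXstar p (i + k), mul_add]
  refine ⟨part1, ?_⟩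
  -- Part 2
  intro h4 hsum
  have h42 : (4 : ℝ≥0∞) / 2 = 2 := by
    rw [show (4 : ℝ≥0∞) = 2 * 2 by norm_num, mul_div_assoc,
      ENNReal.div_self (by norm_num) (by norm_num), mul_one]
  have hbound := part1 4 (by norm_num) h4
  have hC : eLpNorm (X 0) 4 μ ≠ ∞ := (h4 0).eLpNorm_ne_top
  have hle : (∑' i : Fin d → ℤ, eLpNorm (Y i - Ystar i) 2 μ)
      ≤ ∑' i : Fin d → ℤ, eLpNorm (X 0) 4 μ
        * (eLpNorm (X (i + k) - Xstar (i + k)) 4 μ + eLpNorm (X i - Xstar i) 4 μ) := by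
    refine ENNReal.tsum_le_tsum fun i => ?_
    rw [← h42]
    exact hbound i
  have hshift : (∑' i : Fin d → ℤ, eLpNorm (X (i + k) - Xstar (i + k)) 4 μ)
      = ∑' i : Fin d → ℤ, eLpNorm (X i - Xstar i) 4 μ :=
    (Equiv.addRight k).tsum_eq (fun i => eLpNorm (X i - Xstar i) 4 μ)
  have hfin : (∑' i : Fin d → ℤ, eLpNorm (X 0) 4 μ
      * (eLpNorm (X (i + k) - Xstar (i + k)) 4 μ + eLpNorm (X i - Xstar i) 4 μ)) ≠ ∞ := by
    rw [ENNReal.tsum_mul_left, ENNReal.tsum_add, hshift]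
    exact ENNReal.mul_ne_top hC (ENNReal.add_ne_top.2 ⟨hsum, hsum⟩)
  exact fun h => hfin (top_le_iff.mp (h ▸ hle))
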